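/- The invariant pseudo-Hermitian metric on 𝔪 = 𝔤/𝔥 is unique up to scale: every symmetric bilinear form B' on 𝔪 satisfying B'(Ju, Jv) = B'(u, v) for all u, v ∈ 𝔪 and B'(ρ(X)u, v) + B'(u, ρ(X)v) = 0 for all X ∈ 𝔥 and u, v ∈ 𝔪 is a real scalar multiple of the form B with B(z̄, ē) = B(x̄₂, x̄₄) = 1/2, B(b̄, b̄) = B(x̄₃, x̄₃) = −1 and B = 0 on all other pairs of basis vectors. -/

import Mathlib

noncomputable section

/-- The underlying space of the 9-dimensional Lie algebra `𝔤`; coordinates are taken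
with respect to the ordered basis `z, b, x₁, x₂, x₃, x₄, h, e, f`
(so index 0 = z, 1 = b, 2 = x₁, 3 = x₂, 4 = x₃, 5 = x₄, 6 = h, 7 = e, 8 = f). -/
def G : Type := Fin 9 → ℝ

instance : AddCommGroup G := inferInstanceAs (AddCommGroup (Fin 9 → ℝ))
instance : Module ℝ G := inferInstanceAs (Module ℝ (Fin 9 → ℝ))

@[simp] lemma G.add_apply (u v : G) (k : Fin 9) : (u + v) k = u k + v k := rfl
@[simp] lemma G.smul_apply (c : ℝ) (u : G) (k : Fin 9) : (c • u) k = c * u k := rfl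
@[simp] lemma G.zero_apply (k : Fin 9) : (0 : G) k = 0 := rfl

/-- The Lie bracket of `𝔤` determined by `[b,xᵢ] = xᵢ`, `[b,z] = 2z`, `[h,x₁] = −3x₁`,
`[h,x₂] = −x₂`, `[h,x₃] = x₃`, `[h,x₄] = 3x₄`, `[f,x₂] = −3x₁`, `[f,x₃] = −2x₂`,
`[f,x₄] = −x₃`, `[e,x₁] = x₂`, `[e,x₂] = 2x₃`, `[e,x₃] = 3x₄`, `[x₁,x₄] = z`,
`[x₂,x₃] = −3z`, `[h,f] = −2f`, `[h,e] = 2e`, `[f,e] = h`, all other brackets of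
basis elements being zero. -/
def gb (u v : G) : G := fun k =>
  match k with
  | 0 => -2*(u 0*v 1 - u 1*v 0) + (u 2*v 5 - u 5*v 2) - 3*(u 3*v 4 - u 4*v 3)
  | 1 => 0
  | 2 => (u 1*v 2 - u 2*v 1) + 3*(u 2*v 6 - u 6*v 2) + 3*(u 3*v 8 - u 8*v 3)
  | 3 => (u 1*v 3 - u 3*v 1) - (u 2*v 7 - u 7*v 2) + (u 3*v 6 - u 6*v 3) + 2*(u 4*v 8 - u 8*v 4)
  | 4 => (u 1*v 4 - u 4*v 1) - 2*(u 3*v 7 - u 7*v 3) - (u 4*v 6 - u 6*v 4) + (u 5*v 8 - u 8*v 5)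
  | 5 => (u 1*v 5 - u 5*v 1) - 3*(u 4*v 7 - u 7*v 4) - 3*(u 5*v 6 - u 6*v 5)
  | 6 => -(u 7*v 8 - u 8*v 7)
  | 7 => 2*(u 6*v 7 - u 7*v 6)
  | 8 => -2*(u 6*v 8 - u 8*v 6)

instance : LieRing G where
  bracket := gb
  add_lie := by intro x y z; funext k; fin_cases k <;> simp only [gb, G.add_apply] <;> ring
  lie_add := by intro x y z; funext k; fin_cases k <;> simp only [gb, G.add_apply] <;> ring
  lie_self := by intro x; funext k; fin_cases k <;> simp only [gb, G.zero_apply] <;> ring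
  leibniz_lie := by intro x y z; funext k; fin_cases k <;> simp only [gb, G.add_apply] <;> ring

lemma G.lie_def (u v : G) : ⁅u, v⁆ = gb u v := rfl

instance : LieAlgebra ℝ G where
  lie_smul := by
    intro c x y; funext k
    rw [G.lie_def, G.lie_def]
    fin_cases k <;> simp only [gb, G.smul_apply] <;> ring

/-- basis vector `z` -/ def zv : G := Pi.single 0 1
/-- basis vector `b` -/ def bv : G := Pi.single 1 1
/-- basis vector `x₁` -/ def x1v : G := Pi.single 2 1
/-- basis vector `x₂` -/ def x2v : G := Pi.single 3 1
/-- basis vector `x₃` -/ def x3v : G := Pi.single 4 1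
/-- basis vector `x₄` -/ def x4v : G := Pi.single 5 1
/-- basis vector `h` -/ def hv : G := Pi.single 6 1
/-- basis vector `e` -/ def ev : G := Pi.single 7 1
/-- basis vector `f` -/ def fv : G := Pi.single 8 1


/-- The subalgebra `𝔥 = span{x₁, h − b, f − z}` (as a subspace of `𝔤`). -/
def Hsub : Submodule ℝ G := Submodule.span ℝ {x1v, hv - bv, fv - zv}

/-- The quotient map `π : 𝔤 → 𝔪 = 𝔤/𝔥`. -/
def pr : G →ₗ[ℝ] G ⧸ Hsub := Hsub.mkQ

/-- The defining values of the invariant almost complex structure `J` on `𝔪 = 𝔤/𝔥`: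
`J z̄ = x̄₂`, `J b̄ = −x̄₃`, `J ē = x̄₄`, `J x̄₂ = −z̄`, `J x̄₃ = b̄`, `J x̄₄ = −ē`. -/
def IsJ (J : Module.End ℝ (G ⧸ Hsub)) : Prop :=
  J (pr zv) = pr x2v ∧ J (pr bv) = -pr x3v ∧ J (pr ev) = pr x4v ∧
  J (pr x2v) = -pr zv ∧ J (pr x3v) = pr bv ∧ J (pr x4v) = -pr ev

/-- The ordered basis `z̄, b̄, ē, x̄₂, x̄₃, x̄₄` of `𝔪 = 𝔤/𝔥`. -/
def mbas : Fin 6 → G ⧸ Hsub := ![pr zv, pr bv, pr ev, pr x2v, pr x3v, pr x4v]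

/-- The Gram matrix of the invariant pseudo-Hermitian metric `B` in the basis
`z̄, b̄, ē, x̄₂, x̄₃, x̄₄`: `B(z̄,ē) = 1/2`, `B(x̄₂,x̄₄) = 1/2`, `B(b̄,b̄) = −1`,
`B(x̄₃,x̄₃) = −1`, and `B = 0` on all other pairs of basis vectors. -/
def Bmat : Matrix (Fin 6) (Fin 6) ℝ :=
  !![0,    0, 1/2,   0,  0,   0;
     0,   -1,   0,   0,  0,   0;
     1/2,  0,   0,   0,  0,   0;
     0,    0,   0,   0,  0, 1/2;
     0,    0,   0,   0, -1,   0;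
     0,    0,   0, 1/2,  0,   0]

/-- The defining values of the bilinear form `B` on `𝔪`. -/
def IsB (B : LinearMap.BilinForm ℝ (G ⧸ Hsub)) : Prop :=
  ∀ i j : Fin 6, B (mbas i) (mbas j) = Bmat i j

-- auxiliary lemmas
@[simp] lemma G.sub_apply (u v : G) (k : Fin 9) : (u - v) k = u k - v k := rfl
@[simp] lemma G.neg_apply (u : G) (k : Fin 9) : (-u) k = -(u k) := rfl

lemma brk_h_z : ⁅hv - bv, zv⁆ = (-2:ℝ) • zv := by
  funext k; rw [G.lie_def]
  fin_cases k <;> simp only [gb, G.sub_apply, G.smul_apply, G.neg_apply, G.add_apply, G.zero_apply] <;> simp [hv, bv, zv, Pi.single_apply] <;> norm_num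

lemma brk_h_b : ⁅hv - bv, bv⁆ = 0 := by
  funext k; rw [G.lie_def]
  fin_cases k <;> simp only [gb, G.sub_apply, G.smul_apply, G.neg_apply, G.add_apply, G.zero_apply] <;> simp [hv, bv, Pi.single_apply] <;> norm_num

lemma brk_h_e : ⁅hv - bv, ev⁆ = (2:ℝ) • ev := by
  funext k; rw [G.lie_def]
  fin_cases k <;> simp only [gb, G.sub_apply, G.smul_apply, G.neg_apply, G.add_apply, G.zero_apply] <;> simp [hv, bv, ev, Pi.single_apply] <;> norm_num

lemma brk_h_x2 : ⁅hv - bv, x2v⁆ = (-2:ℝ) • x2v := by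
  funext k; rw [G.lie_def]
  fin_cases k <;> simp only [gb, G.sub_apply, G.smul_apply, G.neg_apply, G.add_apply, G.zero_apply] <;> simp [hv, bv, x2v, Pi.single_apply] <;> norm_num

lemma brk_h_x3 : ⁅hv - bv, x3v⁆ = 0 := by
  funext k; rw [G.lie_def]
  fin_cases k <;> simp only [gb, G.sub_apply, G.smul_apply, G.neg_apply, G.add_apply, G.zero_apply] <;> simp [hv, bv, x3v, Pi.single_apply] <;> norm_num

lemma brk_h_x4 : ⁅hv - bv, x4v⁆ = (2:ℝ) • x4v := by
  funext k; rw [G.lie_def]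
  fin_cases k <;> simp only [gb, G.sub_apply, G.smul_apply, G.neg_apply, G.add_apply, G.zero_apply] <;> simp [hv, bv, x4v, Pi.single_apply] <;> norm_num

lemma brk_x1_e : ⁅x1v, ev⁆ = -x2v := by
  funext k; rw [G.lie_def]
  fin_cases k <;> simp only [gb, G.sub_apply, G.smul_apply, G.neg_apply, G.add_apply, G.zero_apply] <;> simp [x1v, ev, x2v, Pi.single_apply, Pi.neg_apply] <;> norm_num

lemma brk_x1_x4 : ⁅x1v, x4v⁆ = zv := by
  funext k; rw [G.lie_def]
  fin_cases k <;> simp [gb, x1v, x4v, zv, Pi.single_apply] <;> norm_num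

lemma brk_f_b : ⁅fv - zv, bv⁆ = (2:ℝ) • zv := by
  funext k; rw [G.lie_def]
  fin_cases k <;> simp only [gb, G.sub_apply, G.smul_apply, G.neg_apply, G.add_apply, G.zero_apply] <;> simp [fv, zv, bv, Pi.single_apply] <;> norm_num

lemma brk_f_e : ⁅fv - zv, ev⁆ = hv := by
  funext k; rw [G.lie_def]
  fin_cases k <;> simp only [gb, G.sub_apply, G.smul_apply, G.neg_apply, G.add_apply, G.zero_apply] <;> simp [fv, zv, ev, hv, Pi.single_apply] <;> norm_num

lemma memx1 : x1v ∈ Hsub := Submodule.subset_span (by simp)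
lemma memhb : hv - bv ∈ Hsub := Submodule.subset_span (by simp)
lemma memfz : fv - zv ∈ Hsub := Submodule.subset_span (by simp)

lemma px1 : pr x1v = 0 := (Submodule.Quotient.mk_eq_zero _).2 memx1
lemma phb : pr hv = pr bv := by
  have : pr (hv - bv) = 0 := (Submodule.Quotient.mk_eq_zero _).2 memhb
  rw [map_sub] at this; linear_combination (norm := module) this
lemma pfz : pr fv = pr zv := by
  have : pr (fv - zv) = 0 := (Submodule.Quotient.mk_eq_zero _).2 memfz
  rw [map_sub] at this; linear_combination (norm := module) this

lemma hspan : Submodule.span ℝ (Set.range mbas) = ⊤ := by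
  rw [eq_top_iff]; rintro x -
  obtain ⟨g, rfl⟩ := Submodule.mkQ_surjective Hsub x
  have hg : (g : G) = (g 0) • zv + (g 1) • bv + (g 2) • x1v + (g 3) • x2v + (g 4) • x3v
      + (g 5) • x4v + (g 6) • hv + (g 7) • ev + (g 8) • fv := by
    funext k; fin_cases k <;>
      simp only [G.add_apply, G.smul_apply] <;> simp [zv, bv, x1v, x2v, x3v, x4v, hv, ev, fv, Pi.single_apply]
  show Hsub.mkQ g ∈ _
  rw [hg]
  simp only [map_add, map_smul]
  show (g 0) • pr zv + (g 1) • pr bv + (g 2) • pr x1v + (g 3) • pr x2v + (g 4) • pr x3v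
      + (g 5) • pr x4v + (g 6) • pr hv + (g 7) • pr ev + (g 8) • pr fv ∈ _
  rw [px1, phb, pfz]
  have m0 : pr zv ∈ Submodule.span ℝ (Set.range mbas) := Submodule.subset_span ⟨0, rfl⟩
  have m1 : pr bv ∈ Submodule.span ℝ (Set.range mbas) := Submodule.subset_span ⟨1, rfl⟩
  have m2 : pr ev ∈ Submodule.span ℝ (Set.range mbas) := Submodule.subset_span ⟨2, rfl⟩
  have m3 : pr x2v ∈ Submodule.span ℝ (Set.range mbas) := Submodule.subset_span ⟨3, rfl⟩
  have m4 : pr x3v ∈ Submodule.span ℝ (Set.range mbas) := Submodule.subset_span ⟨4, rfl⟩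
  have m5 : pr x4v ∈ Submodule.span ℝ (Set.range mbas) := Submodule.subset_span ⟨5, rfl⟩
  exact Submodule.add_mem _ (Submodule.add_mem _ (Submodule.add_mem _ (Submodule.add_mem _
    (Submodule.add_mem _ (Submodule.add_mem _ (Submodule.add_mem _ (Submodule.add_mem _
    (Submodule.smul_mem _ _ m0) (Submodule.smul_mem _ _ m1)) (Submodule.smul_mem _ _ (Submodule.zero_mem _)))
    (Submodule.smul_mem _ _ m3)) (Submodule.smul_mem _ _ m4)) (Submodule.smul_mem _ _ m5))
    (Submodule.smul_mem _ _ m1)) (Submodule.smul_mem _ _ m2)) (Submodule.smul_mem _ _ m0)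

lemma cons_val_five' {α : Type*} (x0 x1 x2 x3 x4 x5 : α) :
    ![x0, x1, x2, x3, x4, x5] (5 : Fin 6) = x5 := rfl

set_option maxHeartbeats 1600000 in
/-- The invariant pseudo-Hermitian metric on `𝔪 = 𝔤/𝔥` is unique up to
scale: every symmetric bilinear form `B'` on `𝔪` satisfying `B'(Ju,Jv) = B'(u,v)` and
`B'(ρ(X)u, v) + B'(u, ρ(X)v) = 0` for all `X ∈ 𝔥` is a real scalar multiple of the
form `B` with `B(z̄,ē) = B(x̄₂,x̄₄) = 1/2`, `B(b̄,b̄) = B(x̄₃,x̄₃) = −1` and `B = 0` on all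
other pairs of basis vectors. -/
theorem stmt11 (J : Module.End ℝ (G ⧸ Hsub)) (hJ : IsJ J)
    (B : LinearMap.BilinForm ℝ (G ⧸ Hsub)) (hB : IsB B)
    (B' : LinearMap.BilinForm ℝ (G ⧸ Hsub))
    (hB'symm : ∀ u v : G ⧸ Hsub, B' u v = B' v u)
    (hB'herm : ∀ u v : G ⧸ Hsub, B' (J u) (J v) = B' u v)
    (hB'inv : ∀ X ∈ Hsub, ∀ u v : G, B' (pr ⁅X, u⁆) (pr v) + B' (pr u) (pr ⁅X, v⁆) = 0) :
    ∃ c : ℝ, B' = c • B := by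
  obtain ⟨hJ1, hJ2, hJ3, hJ4, hJ5, hJ6⟩ := hJ
  set c : ℝ := 2 * B' (pr zv) (pr ev) with hc
  have inv_h := hB'inv (hv - bv) memhb
  have inv_x1 := hB'inv x1v memx1
  have inv_f := hB'inv (fv - zv) memfz
  -- weight relations from h - b
  have r00 : B' (pr zv) (pr zv) = 0 := by
    have r := inv_h zv zv
    rw [brk_h_z] at r
    simp only [map_smul, LinearMap.smul_apply, smul_eq_mul] at r; linarith
  have r01 : B' (pr zv) (pr bv) = 0 := by
    have r := inv_h zv bv
    rw [brk_h_z, brk_h_b] at r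
    simp only [map_smul, map_zero, LinearMap.smul_apply, LinearMap.zero_apply,
      smul_eq_mul] at r; linarith
  have r03 : B' (pr zv) (pr x2v) = 0 := by
    have r := inv_h zv x2v
    rw [brk_h_z, brk_h_x2] at r
    simp only [map_smul, LinearMap.smul_apply, smul_eq_mul] at r; linarith
  have r04 : B' (pr zv) (pr x3v) = 0 := by
    have r := inv_h zv x3v
    rw [brk_h_z, brk_h_x3] at r
    simp only [map_smul, map_zero, LinearMap.smul_apply, LinearMap.zero_apply,
      smul_eq_mul] at r; linarith
  have r12 : B' (pr bv) (pr ev) = 0 := by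
    have r := inv_h bv ev
    rw [brk_h_b, brk_h_e] at r
    simp only [map_smul, map_zero, LinearMap.smul_apply, LinearMap.zero_apply,
      smul_eq_mul] at r; linarith
  have r13 : B' (pr bv) (pr x2v) = 0 := by
    have r := inv_h bv x2v
    rw [brk_h_b, brk_h_x2] at r
    simp only [map_smul, map_zero, LinearMap.smul_apply, LinearMap.zero_apply,
      smul_eq_mul] at r; linarith
  have r15 : B' (pr bv) (pr x4v) = 0 := by
    have r := inv_h bv x4v
    rw [brk_h_b, brk_h_x4] at r
    simp only [map_smul, map_zero, LinearMap.smul_apply, LinearMap.zero_apply,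
      smul_eq_mul] at r; linarith
  have r22 : B' (pr ev) (pr ev) = 0 := by
    have r := inv_h ev ev
    rw [brk_h_e] at r
    simp only [map_smul, LinearMap.smul_apply, smul_eq_mul] at r; linarith
  have r24 : B' (pr ev) (pr x3v) = 0 := by
    have r := inv_h ev x3v
    rw [brk_h_e, brk_h_x3] at r
    simp only [map_smul, map_zero, LinearMap.smul_apply, LinearMap.zero_apply,
      smul_eq_mul] at r; linarith
  have r25 : B' (pr ev) (pr x4v) = 0 := by
    have r := inv_h ev x4v
    rw [brk_h_e, brk_h_x4] at r
    simp only [map_smul, LinearMap.smul_apply, smul_eq_mul] at r; linarith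
  have r33 : B' (pr x2v) (pr x2v) = 0 := by
    have r := inv_h x2v x2v
    rw [brk_h_x2] at r
    simp only [map_smul, LinearMap.smul_apply, smul_eq_mul] at r; linarith
  have r34 : B' (pr x2v) (pr x3v) = 0 := by
    have r := inv_h x2v x3v
    rw [brk_h_x2, brk_h_x3] at r
    simp only [map_smul, map_zero, LinearMap.smul_apply, LinearMap.zero_apply,
      smul_eq_mul] at r; linarith
  have r45 : B' (pr x3v) (pr x4v) = 0 := by
    have r := inv_h x3v x4v
    rw [brk_h_x3, brk_h_x4] at r
    simp only [map_smul, map_zero, LinearMap.smul_apply, LinearMap.zero_apply,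
      smul_eq_mul] at r; linarith
  have r55 : B' (pr x4v) (pr x4v) = 0 := by
    have r := inv_h x4v x4v
    rw [brk_h_x4] at r
    simp only [map_smul, LinearMap.smul_apply, smul_eq_mul] at r; linarith
  -- relations from x1
  have r23 : B' (pr ev) (pr x2v) = 0 := by
    have r := inv_x1 ev ev
    rw [brk_x1_e] at r
    simp only [map_neg, LinearMap.neg_apply] at r
    have := hB'symm (pr ev) (pr x2v); linarith
  have r05 : B' (pr zv) (pr x4v) = 0 := by
    have r := inv_x1 x4v x4v
    rw [brk_x1_x4] at r
    have := hB'symm (pr zv) (pr x4v); linarith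
  -- relation from f - z
  have r11 : B' (pr bv) (pr bv) = -c := by
    have r := inv_f bv ev
    rw [brk_f_b, brk_f_e, phb] at r
    simp only [map_smul, LinearMap.smul_apply, smul_eq_mul] at r
    have := hB'symm (pr bv) (pr bv); linarith
  -- relations from J
  have r35 : B' (pr x2v) (pr x4v) = c / 2 := by
    have r := hB'herm (pr zv) (pr ev)
    rw [hJ1, hJ3] at r; linarith
  have r44 : B' (pr x3v) (pr x3v) = -c := by
    have r := hB'herm (pr bv) (pr bv)
    rw [hJ2] at r
    simp only [map_neg, LinearMap.neg_apply, neg_neg] at r; linarith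
  have r14 : B' (pr bv) (pr x3v) = 0 := by
    have r := hB'herm (pr bv) (pr x3v)
    rw [hJ2, hJ5] at r
    simp only [map_neg, LinearMap.neg_apply] at r
    have := hB'symm (pr x3v) (pr bv); linarith
  refine ⟨c, ?_⟩
  apply LinearMap.ext_on hspan
  rintro _ ⟨i, rfl⟩
  apply LinearMap.ext_on hspan
  rintro _ ⟨j, rfl⟩
  have hs : ((c • B) (mbas i)) (mbas j) = c * Bmat i j := by
    rw [LinearMap.smul_apply, LinearMap.smul_apply, hB i j, smul_eq_mul]
  rw [hs]
  fin_cases i <;> fin_cases j <;>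
    [ (exact show (B' (pr zv)) (pr zv) = c * 0 by linarith [hc, r00]);
      (exact show (B' (pr zv)) (pr bv) = c * 0 by linarith [hc, r01]);
      (exact show (B' (pr zv)) (pr ev) = c * (1/2:ℝ) by linarith [hc]);
      (exact show (B' (pr zv)) (pr x2v) = c * 0 by linarith [hc, r03]);
      (exact show (B' (pr zv)) (pr x3v) = c * 0 by linarith [hc, r04]);
      (exact show (B' (pr zv)) (pr x4v) = c * 0 by linarith [hc, r05]);
      (exact show (B' (pr bv)) (pr zv) = c * 0 by linarith [hc, r01, hB'symm (pr bv) (pr zv)]);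
      (exact show (B' (pr bv)) (pr bv) = c * (-1:ℝ) by linarith [hc, r11]);
      (exact show (B' (pr bv)) (pr ev) = c * 0 by linarith [hc, r12]);
      (exact show (B' (pr bv)) (pr x2v) = c * 0 by linarith [hc, r13]);
      (exact show (B' (pr bv)) (pr x3v) = c * 0 by linarith [hc, r14]);
      (exact show (B' (pr bv)) (pr x4v) = c * 0 by linarith [hc, r15]);
      (exact show (B' (pr ev)) (pr zv) = c * (1/2:ℝ) by linarith [hc, hB'symm (pr ev) (pr zv)]);
      (exact show (B' (pr ev)) (pr bv) = c * 0 by linarith [hc, r12, hB'symm (pr ev) (pr bv)]);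
      (exact show (B' (pr ev)) (pr ev) = c * 0 by linarith [hc, r22]);
      (exact show (B' (pr ev)) (pr x2v) = c * 0 by linarith [hc, r23]);
      (exact show (B' (pr ev)) (pr x3v) = c * 0 by linarith [hc, r24]);
      (exact show (B' (pr ev)) (pr x4v) = c * 0 by linarith [hc, r25]);
      (exact show (B' (pr x2v)) (pr zv) = c * 0 by linarith [hc, r03, hB'symm (pr x2v) (pr zv)]);
      (exact show (B' (pr x2v)) (pr bv) = c * 0 by linarith [hc, r13, hB'symm (pr x2v) (pr bv)]);
      (exact show (B' (pr x2v)) (pr ev) = c * 0 by linarith [hc, r23, hB'symm (pr x2v) (pr ev)]);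
      (exact show (B' (pr x2v)) (pr x2v) = c * 0 by linarith [hc, r33]);
      (exact show (B' (pr x2v)) (pr x3v) = c * 0 by linarith [hc, r34]);
      (exact show (B' (pr x2v)) (pr x4v) = c * (1/2:ℝ) by linarith [hc, r35]);
      (exact show (B' (pr x3v)) (pr zv) = c * 0 by linarith [hc, r04, hB'symm (pr x3v) (pr zv)]);
      (exact show (B' (pr x3v)) (pr bv) = c * 0 by linarith [hc, r14, hB'symm (pr x3v) (pr bv)]);
      (exact show (B' (pr x3v)) (pr ev) = c * 0 by linarith [hc, r24, hB'symm (pr x3v) (pr ev)]);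
      (exact show (B' (pr x3v)) (pr x2v) = c * 0 by linarith [hc, r34, hB'symm (pr x3v) (pr x2v)]);
      (exact show (B' (pr x3v)) (pr x3v) = c * (-1:ℝ) by linarith [hc, r44]);
      (exact show (B' (pr x3v)) (pr x4v) = c * 0 by linarith [hc, r45]);
      (exact show (B' (pr x4v)) (pr zv) = c * 0 by linarith [hc, r05, hB'symm (pr x4v) (pr zv)]);
      (exact show (B' (pr x4v)) (pr bv) = c * 0 by linarith [hc, r15, hB'symm (pr x4v) (pr bv)]);
      (exact show (B' (pr x4v)) (pr ev) = c * 0 by linarith [hc, r25, hB'symm (pr x4v) (pr ev)]);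
      (exact show (B' (pr x4v)) (pr x2v) = c * (1/2:ℝ) by linarith [hc, r35, hB'symm (pr x4v) (pr x2v)]);
      (exact show (B' (pr x4v)) (pr x3v) = c * 0 by linarith [hc, r45, hB'symm (pr x4v) (pr x3v)]);
      (exact show (B' (pr x4v)) (pr x4v) = c * 0 by linarith [hc, r55] ) ]
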